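/- For any η > 0, λ ≥ 0, B_x, B_w, B_y > 0 and D_hid ≥ 2d + 10, there exists a masked attention layer with 3 heads such that the following holds: for any N and any input H ∈ ℝ^{D_hid×2N} with columns h_{2i−1} = [x_i; 0; w_i; p^x_i] and h_{2i} = [x_i; y_i; 0_d; p^y_i] (i ∈ [N]) satisfying ‖x_i‖₂ ≤ B_x, |y_i| ≤ B_y and ‖w_i‖₂ ≤ B_w for all i, the output Attn(H) has column 2i−1 equal to [x_i; 0; w̃_i; p^x_i], where w̃_i = w_i − η_i ∇L̂_{i−1}^λ(w_i) with η_i = η(i−1)/(2i−1), and column 2i equal to h_{2i}, for every i ∈ [N]. That is, a single attention layer simultaneously performs one step of gradient descent on the ridge objective at every x-token. -/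

import Mathlib

open scoped BigOperators Matrix

noncomputable section

/-- The ReLU activation. -/
def relu (t : ℝ) : ℝ := max t 0

/-- Entrywise ReLU on vectors. -/
def reluV {n : ℕ} (v : Fin n → ℝ) : Fin n → ℝ := fun i => relu (v i)

/-- Leaky ReLU with slope `ρ`. -/
def lrelu (ρ t : ℝ) : ℝ := max t (ρ * t)

/-- Entrywise leaky ReLU. -/
def lreluV (ρ : ℝ) {n : ℕ} (v : Fin n → ℝ) : Fin n → ℝ := fun i => lrelu ρ (v i)

/-- Euclidean (ℓ2) norm of a vector in `ℝ^n`. -/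
def l2norm {n : ℕ} (v : Fin n → ℝ) : ℝ := Real.sqrt (∑ i, (v i) ^ 2)

/-- An attention head: (query, key, value) matrices. -/
structure AttnHead (Dhid : ℕ) where
  Q : Matrix (Fin Dhid) (Fin Dhid) ℝ
  K : Matrix (Fin Dhid) (Fin Dhid) ℝ
  V : Matrix (Fin Dhid) (Fin Dhid) ℝ

/-- Masked attention layer with the normalized-ReLU activation.  Tokens are the
columns `H i`, indexed 0-based (math index `i+1`), so the normalization is
`1/(i+1)` and keys range over `j ≤ i`. -/
def attnLayer {Dhid Mh : ℕ} (heads : Fin Mh → AttnHead Dhid) {M : ℕ}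
    (H : Fin M → Fin Dhid → ℝ) : Fin M → Fin Dhid → ℝ := fun i =>
  H i + ∑ m : Fin Mh, (1 / (((i : ℕ) : ℝ) + 1)) •
    ∑ j ∈ Finset.Iic i,
      relu (((heads m).Q *ᵥ H i) ⬝ᵥ ((heads m).K *ᵥ H j)) • ((heads m).V *ᵥ H j)

/-- MLP layer with residual connection. -/
def mlpLayer {Dhid : ℕ} (W1 W2 : Matrix (Fin Dhid) (Fin Dhid) ℝ) {M : ℕ}
    (H : Fin M → Fin Dhid → ℝ) : Fin M → Fin Dhid → ℝ := fun i =>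
  H i + W2 *ᵥ reluV (W1 *ᵥ H i)

/-- One transformer block: a masked attention layer followed by an MLP layer. -/
structure TFLayer (Dhid : ℕ) where
  Mh : ℕ
  heads : Fin Mh → AttnHead Dhid
  W1 : Matrix (Fin Dhid) (Fin Dhid) ℝ
  W2 : Matrix (Fin Dhid) (Fin Dhid) ℝ

/-- Apply one transformer block. -/
def TFLayer.apply {Dhid : ℕ} (l : TFLayer Dhid) {M : ℕ}
    (H : Fin M → Fin Dhid → ℝ) : Fin M → Fin Dhid → ℝ :=
  mlpLayer l.W1 l.W2 (attnLayer l.heads H)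

/-- A decoder transformer: the composition of its blocks. -/
def tfApply {Dhid : ℕ} (layers : List (TFLayer Dhid)) {M : ℕ}
    (H : Fin M → Fin Dhid → ℝ) : Fin M → Fin Dhid → ℝ :=
  layers.foldl (fun G l => TFLayer.apply l G) H

/-- The vector in `ℝ^Dhid` whose last `m` coordinates are given by `a` and whose
remaining coordinates vanish (zero padding). -/
def tailVec (Dhid : ℕ) {m : ℕ} (a : Fin m → ℝ) : Fin Dhid → ℝ := fun r =>
  if _ : Dhid ≤ (r : ℕ) + m then
    if h2 : (r : ℕ) + m - Dhid < m then a ⟨(r : ℕ) + m - Dhid, h2⟩ else 0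
  else 0

/-- The positional encoding `p^x_i` (1-based math index `i`):
zero padding followed by `[1; 2i-1; (2i-1)²; (2i-1)³; i; i²; 1; i]`. -/
def posXvec (Dhid : ℕ) (i : ℕ) : Fin Dhid → ℝ :=
  tailVec Dhid
    ![1, 2*(i:ℝ)-1, (2*(i:ℝ)-1)^2, (2*(i:ℝ)-1)^3, (i:ℝ), (i:ℝ)^2, 1, (i:ℝ)]

/-- The positional encoding `p^y_i`:
zero padding followed by `[1; 2i; (2i)²; (2i)³; i; i²; 0; 0]`. -/
def posYvec (Dhid : ℕ) (i : ℕ) : Fin Dhid → ℝ :=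
  tailVec Dhid ![1, 2*(i:ℝ), (2*(i:ℝ))^2, (2*(i:ℝ))^3, (i:ℝ), (i:ℝ)^2, 0, 0]

/-- Supervised token format with value block of width `D`: for 0-based example
index `i = t/2`, the x-token (even `t`) is `[zx i; 0; p^x_{i+1}]` and the
y-token (odd `t`) is `[zy i; y i; p^y_{i+1}]`. -/
def supFormat (Dhid D N : ℕ) (zx zy : ℕ → Fin D → ℝ) (y : ℕ → ℝ) :
    Fin (2*N) → Fin Dhid → ℝ := fun t r =>
  if h : (r : ℕ) < D then
    (if (t : ℕ) % 2 = 0 then zx ((t : ℕ)/2) ⟨(r : ℕ), h⟩ else zy ((t : ℕ)/2) ⟨(r : ℕ), h⟩)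
  else if (r : ℕ) = D then
    (if (t : ℕ) % 2 = 0 then 0 else y ((t : ℕ)/2))
  else if (t : ℕ) % 2 = 0 then posXvec Dhid ((t : ℕ)/2 + 1) r
  else posYvec Dhid ((t : ℕ)/2 + 1) r

/-- The supervised input format: `h_{2i-1} = [x_i; 0; p^x_i]`,
`h_{2i} = [0_d; y_i; p^y_i]`. -/
def supInput (Dhid d N : ℕ) (x : ℕ → Fin d → ℝ) (y : ℕ → ℝ) :
    Fin (2*N) → Fin Dhid → ℝ :=
  supFormat Dhid d N x (fun _ _ => 0) y

/-- The `(Bs.length + 1)`-layer leaky-ReLU MLP representation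
`Φ(v) = σ_ρ(B_L ⋯ σ_ρ(B_1 v) ⋯)`. -/
def mlpRep (ρ : ℝ) {din D : ℕ} (B1 : Matrix (Fin D) (Fin din) ℝ)
    (Bs : List (Matrix (Fin D) (Fin D) ℝ)) (v : Fin din → ℝ) : Fin D → ℝ :=
  Bs.foldl (fun u B => lreluV ρ (B *ᵥ u)) (lreluV ρ (B1 *ᵥ v))

/-- Ridge empirical risk over the first `n` samples
(equal to `λ/2 ‖w‖²` for `n = 0`, matching the convention `L̂_0 := 0`). -/
def ridgeLoss (lam : ℝ) {D : ℕ} (n : ℕ) (x : ℕ → Fin D → ℝ) (y : ℕ → ℝ)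
    (w : Fin D → ℝ) : ℝ :=
  (1/(2*(n:ℝ))) * ∑ j ∈ Finset.range n, (w ⬝ᵥ x j - y j)^2 + lam/2 * ∑ r, (w r)^2


/-- Token format for the in-context gradient-descent layers: the x-token
`2i-1` is `[x_i; yhat_i; w_i; p^x_i]` and the y-token `2i` is
`[x_i; y_i; 0_d; p^y_i]` (0-based `i = t/2`). -/
def gdFormat (Dhid d N : ℕ) (x : ℕ → Fin d → ℝ) (y yhat : ℕ → ℝ)
    (w : ℕ → Fin d → ℝ) : Fin (2*N) → Fin Dhid → ℝ := fun t r =>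
  if h : (r : ℕ) < d then x ((t : ℕ)/2) ⟨(r : ℕ), h⟩
  else if h1 : (r : ℕ) = d then
    (if (t : ℕ) % 2 = 0 then yhat ((t : ℕ)/2) else y ((t : ℕ)/2))
  else if h2 : (r : ℕ) < 2*d + 1 then
    (if (t : ℕ) % 2 = 0 then w ((t : ℕ)/2) ⟨(r : ℕ) - (d + 1), by omega⟩ else 0)
  else if (t : ℕ) % 2 = 0 then posXvec Dhid ((t : ℕ)/2 + 1) r
  else posYvec Dhid ((t : ℕ)/2 + 1) r

/-- The gradient `∇L̂_n^λ(w)` of the ridge empirical risk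
`L̂_n^λ(w) = (1/(2n)) Σ_{j<n}(⟨w,x_j⟩-y_j)² + (λ/2)‖w‖²` over the first `n`
samples, with the convention `L̂_0^λ := 0` (hence gradient `0` for `n = 0`). -/
def ridgeGrad (lam : ℝ) {d : ℕ} (n : ℕ) (x : ℕ → Fin d → ℝ) (y : ℕ → ℝ)
    (w : Fin d → ℝ) : Fin d → ℝ :=
  if n = 0 then 0
  else (1/(n:ℝ)) • (∑ j ∈ Finset.range n, (w ⬝ᵥ x j - y j) • x j) + lam • w

namespace OneStepGD

lemma relu_of_nonpos {t : ℝ} (h : t ≤ 0) : relu t = 0 := max_eq_right h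
lemma relu_of_nonneg {t : ℝ} (h : 0 ≤ t) : relu t = t := max_eq_left h
lemma relu_sub (v : ℝ) : relu v - relu (-v) = v := by
  rcases le_total 0 v with h | h
  · rw [relu_of_nonneg h, relu_of_nonpos (by linarith)]; ring
  · rw [relu_of_nonpos h, relu_of_nonneg (by linarith)]; ring

lemma sum_ite_col {D : ℕ} {a : ℕ} (ha : a < D) (coef : ℝ) (h : Fin D → ℝ) :
    ∑ c : Fin D, (if (c : ℕ) = a then coef else 0) * h c = coef * h ⟨a, ha⟩ := by
  rw [Finset.sum_eq_single (⟨a, ha⟩ : Fin D)]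
  · simp
  · intro b _ hb
    have hb' : (b : ℕ) ≠ a := fun hc => hb (Fin.ext hc)
    simp [hb']
  · simp

lemma sum_dblock {D d : ℕ} (hd : d ≤ D) (A : Fin d → ℝ) :
    ∑ r : Fin D, (if hr : (r : ℕ) < d then A ⟨(r : ℕ), hr⟩ else 0) = ∑ s : Fin d, A s := by
  have h1 : ∑ r : Fin D, (if hr : (r : ℕ) < d then A ⟨(r : ℕ), hr⟩ else 0)
      = ∑ n ∈ Finset.range D, (if hr : n < d then A ⟨n, hr⟩ else 0) :=
    Fin.sum_univ_eq_sum_range (fun n => if hr : n < d then A ⟨n, hr⟩ else 0) D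
  have h2 : ∑ s : Fin d, A s
      = ∑ n ∈ Finset.range d, (if hr : n < d then A ⟨n, hr⟩ else 0) := by
    rw [← Fin.sum_univ_eq_sum_range (fun n => if hr : n < d then A ⟨n, hr⟩ else 0) d]
    apply Finset.sum_congr rfl
    intro s _
    rw [dif_pos s.isLt]
  rw [h1, h2]
  rw [← Finset.sum_subset (Finset.range_subset_range.mpr hd)]
  intro n _ hn
  rw [dif_neg (by simpa using hn)]

lemma sum_Iic_eq {M : ℕ} (f : Fin M → ℝ) (t : Fin M) (F : ℕ → ℝ)
    (hF : ∀ (n : ℕ) (h : n < M), F n = f ⟨n, h⟩) :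
    ∑ j ∈ Finset.Iic t, f j = ∑ n ∈ Finset.range ((t : ℕ) + 1), F n := by
  have ht := t.isLt
  have h1 : Finset.Iic t = Finset.univ.filter (fun j : Fin M => (j : ℕ) ≤ (t : ℕ)) := by
    ext j
    simp only [Finset.mem_Iic, Finset.mem_filter, Finset.mem_univ, true_and, Fin.le_def]
  rw [h1, Finset.sum_filter]
  have h2 : ∀ j : Fin M,
      (if (j : ℕ) ≤ (t : ℕ) then f j else 0)
        = (fun n => if n ≤ (t : ℕ) then F n else 0) ((j : ℕ)) := by
    intro j
    by_cases h : (j : ℕ) ≤ (t : ℕ) <;> simp [h, hF _ j.isLt]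
  rw [Finset.sum_congr rfl (fun j _ => h2 j),
      Fin.sum_univ_eq_sum_range (fun n => if n ≤ (t : ℕ) then F n else 0) M,
      ← Finset.sum_filter]
  congr 1
  ext n
  simp only [Finset.mem_filter, Finset.mem_range, Nat.lt_succ_iff]
  omega

lemma sum_range_parity (g : ℕ → ℝ) (i : ℕ) :
    ∑ n ∈ Finset.range (2*i+1), g n
      = ∑ k ∈ Finset.range i, g (2*k+1) + ∑ k ∈ Finset.range (i+1), g (2*k) := by
  induction i with
  | zero => simp
  | succ m ih =>
      have h1 : 2*(m+1)+1 = (2*m+1) + 1 + 1 := by ring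
      rw [h1, Finset.sum_range_succ, Finset.sum_range_succ, ih,
          Finset.sum_range_succ (fun k => g (2*k+1)) m,
          Finset.sum_range_succ (fun k => g (2*k)) (m+1)]
      have e1 : 2*m+1+1 = 2*(m+1) := by ring
      have e2 : 2*m+1 = 2*m+1 := rfl
      rw [e1]
      ring


def Amat (d D : ℕ) (e R : ℝ) : Matrix (Fin D) (Fin D) ℝ := Matrix.of fun r c =>
  (if (r : ℕ) < d ∧ (c : ℕ) = d+1+(r : ℕ) then e else 0) +
  (if (r : ℕ) = d ∧ (c : ℕ) = D-2 then -e else 0) +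
  (if (r : ℕ) = D-2 ∧ (c : ℕ) = D-2 then -R else 0)

def A3mat (D : ℕ) (lam : ℝ) : Matrix (Fin D) (Fin D) ℝ := Matrix.of fun r c =>
  (if (r : ℕ) = D-8 ∧ (c : ℕ) = D-1 then lam else 0) +
  (if (r : ℕ) = D-8 ∧ (c : ℕ) = D-2 then -lam else 0) +
  (if (r : ℕ) = D-8 ∧ (c : ℕ) = D-3 then -(2*lam) else 0) +
  (if (r : ℕ) = D-8 ∧ (c : ℕ) = D-4 then lam else 0) +
  (if (r : ℕ) = D-7 ∧ (c : ℕ) = D-1 then lam else 0)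

def Vmat (d D : ℕ) (c0 : ℝ) : Matrix (Fin D) (Fin D) ℝ := Matrix.of fun r c =>
  if (r : ℕ) = (c : ℕ)+(d+1) ∧ (c : ℕ) < d then c0 else 0

def V3mat (d D : ℕ) (c0 : ℝ) : Matrix (Fin D) (Fin D) ℝ := Matrix.of fun r c =>
  if (r : ℕ) = (c : ℕ) ∧ d+1 ≤ (c : ℕ) ∧ (c : ℕ) < 2*d+1 then c0 else 0

lemma Amat_mulVec {d D : ℕ} (hD : 2*d+10 ≤ D) (e R : ℝ) (ht : Fin D → ℝ) (r : Fin D) :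
    (Amat d D e R *ᵥ ht) r
      = (if hr : (r : ℕ) < d then e * ht ⟨d+1+(r : ℕ), by omega⟩ else 0)
        + (if (r : ℕ) = d then -e * ht ⟨D-2, by omega⟩ else 0)
        + (if (r : ℕ) = D-2 then -R * ht ⟨D-2, by omega⟩ else 0) := by
  show (∑ c : Fin D,
      ((if (r : ℕ) < d ∧ (c : ℕ) = d+1+(r : ℕ) then e else 0) +
       (if (r : ℕ) = d ∧ (c : ℕ) = D-2 then -e else 0) +
       (if (r : ℕ) = D-2 ∧ (c : ℕ) = D-2 then -R else 0)) * ht c) = _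
  simp only [add_mul, Finset.sum_add_distrib]
  congr 1
  · congr 1
    · by_cases hr : (r : ℕ) < d
      · simp only [hr, true_and, dif_pos hr]
        exact sum_ite_col (by omega) e ht
      · simp only [hr, false_and, if_false, dif_neg hr]
        simp
    · by_cases hr : (r : ℕ) = d
      · simp only [hr, true_and, if_pos rfl]
        exact sum_ite_col (by omega) (-e) ht
      · simp only [hr, false_and, if_false, if_neg hr]
        simp
  · by_cases hr : (r : ℕ) = D-2
    · simp only [hr, true_and, if_pos rfl]
      exact sum_ite_col (by omega) (-R) ht
    · simp only [hr, false_and, if_false, if_neg hr]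
      simp

lemma Amat_score {d D : ℕ} (hD : 2*d+10 ≤ D) (e R : ℝ) (ht hj : Fin D → ℝ) :
    (Amat d D e R *ᵥ ht) ⬝ᵥ hj
      = e * (∑ s : Fin d, ht ⟨d+1+(s : ℕ), by have := s.isLt; omega⟩ * hj ⟨(s : ℕ), by have := s.isLt; omega⟩)
        - e * ht ⟨D-2, by omega⟩ * hj ⟨d, by omega⟩
        - R * ht ⟨D-2, by omega⟩ * hj ⟨D-2, by omega⟩ := by
  show ∑ r : Fin D, (Amat d D e R *ᵥ ht) r * hj r = _
  have h1 : ∀ r : Fin D, (Amat d D e R *ᵥ ht) r * hj r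
      = (if hr : (r : ℕ) < d then
            (e * ht ⟨d+1+(r : ℕ), by omega⟩ * hj ⟨(r : ℕ), by omega⟩) else 0)
        + (if (r : ℕ) = d then (-e * ht ⟨D-2, by omega⟩) else 0) * hj r
        + (if (r : ℕ) = D-2 then (-R * ht ⟨D-2, by omega⟩) else 0) * hj r := by
    intro r
    rw [Amat_mulVec hD]
    by_cases hr : (r : ℕ) < d
    · have h2 : ¬((r : ℕ) = d) := by omega
      have h3 : ¬((r : ℕ) = D-2) := by omega
      simp only [dif_pos hr, if_neg h2, if_neg h3]
      have : hj r = hj ⟨(r : ℕ), by omega⟩ := by congr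
      rw [this]; ring
    · rw [dif_neg hr, dif_neg hr]; ring
  rw [Finset.sum_congr rfl (fun r _ => h1 r)]
  simp only [Finset.sum_add_distrib]
  rw [sum_dblock (by omega) (fun s : Fin d =>
        e * ht ⟨d+1+(s : ℕ), by have := s.isLt; omega⟩ * hj ⟨(s : ℕ), by have := s.isLt; omega⟩),
      sum_ite_col (show d < D by omega) (-e * ht ⟨D-2, by omega⟩) hj,
      sum_ite_col (show D-2 < D by omega) (-R * ht ⟨D-2, by omega⟩) hj,
      Finset.mul_sum]
  have hsum : ∑ s : Fin d, e * ht ⟨d+1+(s : ℕ), by have := s.isLt; omega⟩ * hj ⟨(s : ℕ), by have := s.isLt; omega⟩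
      = ∑ s : Fin d, e * (ht ⟨d+1+(s : ℕ), by have := s.isLt; omega⟩ * hj ⟨(s : ℕ), by have := s.isLt; omega⟩) :=
    Finset.sum_congr rfl (fun s _ => by ring)
  rw [hsum]; ring

lemma A3_mulVec {D : ℕ} (hD : 10 ≤ D) (lam : ℝ) (ht : Fin D → ℝ) (r : Fin D) :
    (A3mat D lam *ᵥ ht) r
      = (if (r : ℕ) = D-8 then
          lam * ht ⟨D-1, by omega⟩ - lam * ht ⟨D-2, by omega⟩
            - 2*lam * ht ⟨D-3, by omega⟩ + lam * ht ⟨D-4, by omega⟩ else 0)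
        + (if (r : ℕ) = D-7 then lam * ht ⟨D-1, by omega⟩ else 0) := by
  have key : ∀ (P : Prop) (_ : Decidable P) (a : ℕ) (ha : a < D) (coef : ℝ),
      (∑ c : Fin D, (if P ∧ (c : ℕ) = a then coef else 0) * ht c)
        = if P then coef * ht ⟨a, ha⟩ else 0 := by
    intro P hdec a ha coef
    by_cases hP : P
    · simp only [hP, true_and, if_pos hP]
      exact sum_ite_col ha coef ht
    · simp only [hP, false_and, if_false]
      simp
  show (∑ c : Fin D,
      ((if (r : ℕ) = D-8 ∧ (c : ℕ) = D-1 then lam else 0) +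
       (if (r : ℕ) = D-8 ∧ (c : ℕ) = D-2 then -lam else 0) +
       (if (r : ℕ) = D-8 ∧ (c : ℕ) = D-3 then -(2*lam) else 0) +
       (if (r : ℕ) = D-8 ∧ (c : ℕ) = D-4 then lam else 0) +
       (if (r : ℕ) = D-7 ∧ (c : ℕ) = D-1 then lam else 0)) * ht c) = _
  simp only [add_mul, Finset.sum_add_distrib]
  rw [key _ inferInstance (D-1) (by omega) lam, key _ inferInstance (D-2) (by omega) (-lam),
      key _ inferInstance (D-3) (by omega) (-(2*lam)), key _ inferInstance (D-4) (by omega) lam,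
      key _ inferInstance (D-1) (by omega) lam]
  split_ifs <;> ring

lemma A3_score {D : ℕ} (hD : 10 ≤ D) (lam : ℝ) (ht hj : Fin D → ℝ) :
    (A3mat D lam *ᵥ ht) ⬝ᵥ hj
      = (lam * ht ⟨D-1, by omega⟩ - lam * ht ⟨D-2, by omega⟩
          - 2*lam * ht ⟨D-3, by omega⟩ + lam * ht ⟨D-4, by omega⟩) * hj ⟨D-8, by omega⟩
        + lam * ht ⟨D-1, by omega⟩ * hj ⟨D-7, by omega⟩ := by
  show ∑ r : Fin D, (A3mat D lam *ᵥ ht) r * hj r = _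
  rw [Finset.sum_congr rfl (fun r _ => by rw [A3_mulVec hD])]
  simp only [add_mul, Finset.sum_add_distrib]
  rw [sum_ite_col (show D-8 < D by omega) _ hj, sum_ite_col (show D-7 < D by omega) _ hj]
  ring

lemma Vmat_apply {d D : ℕ} (hD : 2*d+10 ≤ D) (c0 : ℝ) (h : Fin D → ℝ) (r : Fin D) :
    (Vmat d D c0 *ᵥ h) r
      = if hr : d+1 ≤ (r : ℕ) ∧ (r : ℕ) < 2*d+1 then c0 * h ⟨(r : ℕ)-(d+1), by omega⟩ else 0 := by
  show (∑ c : Fin D, (if (r : ℕ) = (c : ℕ)+(d+1) ∧ (c : ℕ) < d then c0 else 0) * h c) = _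
  by_cases hr : d+1 ≤ (r : ℕ) ∧ (r : ℕ) < 2*d+1
  · rw [dif_pos hr]
    rw [Finset.sum_congr rfl (fun c _ => by
      have : ((r : ℕ) = (c : ℕ)+(d+1) ∧ (c : ℕ) < d) ↔ ((c : ℕ) = (r : ℕ)-(d+1)) := by omega
      rw [if_congr this rfl rfl])]
    exact sum_ite_col (by omega) c0 h
  · rw [dif_neg hr]
    apply Finset.sum_eq_zero
    intro c _
    have : ¬((r : ℕ) = (c : ℕ)+(d+1) ∧ (c : ℕ) < d) := by omega
    simp [this]

lemma V3mat_apply {d D : ℕ} (hD : 2*d+10 ≤ D) (c0 : ℝ) (h : Fin D → ℝ) (r : Fin D) :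
    (V3mat d D c0 *ᵥ h) r
      = if d+1 ≤ (r : ℕ) ∧ (r : ℕ) < 2*d+1 then c0 * h r else 0 := by
  show (∑ c : Fin D, (if (r : ℕ) = (c : ℕ) ∧ d+1 ≤ (c : ℕ) ∧ (c : ℕ) < 2*d+1 then c0 else 0) * h c) = _
  by_cases hr : d+1 ≤ (r : ℕ) ∧ (r : ℕ) < 2*d+1
  · rw [if_pos hr]
    rw [Finset.sum_congr rfl (fun c _ => by
      have : ((r : ℕ) = (c : ℕ) ∧ d+1 ≤ (c : ℕ) ∧ (c : ℕ) < 2*d+1) ↔ ((c : ℕ) = (r : ℕ)) := by omega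
      rw [if_congr this rfl rfl])]
    rw [sum_ite_col r.isLt c0 h]
  · rw [if_neg hr]
    apply Finset.sum_eq_zero
    intro c _
    have : ¬((r : ℕ) = (c : ℕ) ∧ d+1 ≤ (c : ℕ) ∧ (c : ℕ) < 2*d+1) := by omega
    rw [if_neg this, zero_mul]

lemma tailVec_entry {D m : ℕ} (a : Fin m → ℝ) (k : ℕ) (hk1 : 1 ≤ k) (hk2 : k ≤ m) (hD : m ≤ D) :
    tailVec D a ⟨D-k, by omega⟩ = a ⟨m-k, by omega⟩ := by
  unfold tailVec
  have h1 : D ≤ ((⟨D-k, by omega⟩ : Fin D) : ℕ) + m := by simp; omega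
  rw [dif_pos h1]
  have h2 : ((⟨D-k, by omega⟩ : Fin D) : ℕ) + m - D < m := by simp; omega
  rw [dif_pos h2]
  congr 1
  apply Fin.ext
  simp; omega

lemma posX_entry (D i k : ℕ) (hk1 : 1 ≤ k) (hk2 : k ≤ 8) (hD : 8 ≤ D) :
    posXvec D i ⟨D-k, by omega⟩
      = ![1, 2*(i:ℝ)-1, (2*(i:ℝ)-1)^2, (2*(i:ℝ)-1)^3, (i:ℝ), (i:ℝ)^2, 1, (i:ℝ)] ⟨8-k, by omega⟩ := by
  unfold posXvec
  exact tailVec_entry _ k hk1 hk2 hD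

lemma posY_entry (D i k : ℕ) (hk1 : 1 ≤ k) (hk2 : k ≤ 8) (hD : 8 ≤ D) :
    posYvec D i ⟨D-k, by omega⟩
      = ![1, 2*(i:ℝ), (2*(i:ℝ))^2, (2*(i:ℝ))^3, (i:ℝ), (i:ℝ)^2, 0, 0] ⟨8-k, by omega⟩ := by
  unfold posYvec
  exact tailVec_entry _ k hk1 hk2 hD

section gdlemmas

variable {D d N : ℕ} (x : ℕ → Fin d → ℝ) (y yh : ℕ → ℝ) (w : ℕ → Fin d → ℝ) (t : Fin (2*N))

lemma gd_x (hD : 2*d+10 ≤ D) (s : ℕ) (hs : s < d) :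
    gdFormat D d N x y yh w t ⟨s, by omega⟩ = x ((t : ℕ)/2) ⟨s, hs⟩ := by
  unfold gdFormat
  rw [dif_pos (show ((⟨s, by omega⟩ : Fin D) : ℕ) < d from hs)]

lemma gd_y (hD : 2*d+10 ≤ D) :
    gdFormat D d N x y yh w t ⟨d, by omega⟩
      = if (t : ℕ) % 2 = 0 then yh ((t : ℕ)/2) else y ((t : ℕ)/2) := by
  unfold gdFormat
  rw [dif_neg (by simp), dif_pos (by simp)]

lemma gd_w (hD : 2*d+10 ≤ D) (r : Fin D) (hr1 : d+1 ≤ (r : ℕ)) (hr2 : (r : ℕ) < 2*d+1) :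
    gdFormat D d N x y yh w t r
      = if (t : ℕ) % 2 = 0 then w ((t : ℕ)/2) ⟨(r : ℕ)-(d+1), by omega⟩ else 0 := by
  unfold gdFormat
  rw [dif_neg (by omega), dif_neg (by omega), dif_pos hr2]

lemma gd_pos (hD : 2*d+10 ≤ D) (k : ℕ) (hk1 : 1 ≤ k) (hk8 : k ≤ 8) :
    gdFormat D d N x y yh w t ⟨D-k, by omega⟩
      = if (t : ℕ) % 2 = 0 then posXvec D ((t : ℕ)/2+1) ⟨D-k, by omega⟩
        else posYvec D ((t : ℕ)/2+1) ⟨D-k, by omega⟩ := by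
  unfold gdFormat
  rw [dif_neg (by simp; omega), dif_neg (by simp; omega), dif_neg (by simp; omega)]

lemma gd_k8 (hD : 2*d+10 ≤ D) :
    gdFormat D d N x y yh w t ⟨D-8, by omega⟩ = 1 := by
  rw [gd_pos x y yh w t hD 8 (by norm_num) (by norm_num)]
  by_cases ht : (t : ℕ) % 2 = 0
  · rw [if_pos ht, posX_entry D _ 8 (by norm_num) (by norm_num) (by omega)]; rfl
  · rw [if_neg ht, posY_entry D _ 8 (by norm_num) (by norm_num) (by omega)]; rfl

lemma gd_k7 (hD : 2*d+10 ≤ D) :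
    gdFormat D d N x y yh w t ⟨D-7, by omega⟩ = ((t : ℕ) : ℝ) + 1 := by
  rw [gd_pos x y yh w t hD 7 (by norm_num) (by norm_num)]
  by_cases ht : (t : ℕ) % 2 = 0
  · rw [if_pos ht, posX_entry D _ 7 (by norm_num) (by norm_num) (by omega)]
    show 2*((((t : ℕ)/2+1 : ℕ)) : ℝ) - 1 = _
    have hnat : (t : ℕ) = 2*((t : ℕ)/2) := by omega
    have hr : ((t : ℕ) : ℝ) = 2*(((t : ℕ)/2 : ℕ) : ℝ) := by exact_mod_cast hnat
    rw [hr]; push_cast; ring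
  · rw [if_neg ht, posY_entry D _ 7 (by norm_num) (by norm_num) (by omega)]
    show 2*((((t : ℕ)/2+1 : ℕ)) : ℝ) = _
    have hnat : (t : ℕ) = 2*((t : ℕ)/2) + 1 := by omega
    have hr : ((t : ℕ) : ℝ) = 2*(((t : ℕ)/2 : ℕ) : ℝ) + 1 := by exact_mod_cast hnat
    rw [hr]; push_cast; ring

lemma gd_k4 (hD : 2*d+10 ≤ D) :
    gdFormat D d N x y yh w t ⟨D-4, by omega⟩ = (((t : ℕ)/2 : ℕ) : ℝ) + 1 := by
  rw [gd_pos x y yh w t hD 4 (by norm_num) (by norm_num)]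
  by_cases ht : (t : ℕ) % 2 = 0
  · rw [if_pos ht, posX_entry D _ 4 (by norm_num) (by norm_num) (by omega)]
    show ((((t : ℕ)/2+1 : ℕ)) : ℝ) = _
    push_cast; ring
  · rw [if_neg ht, posY_entry D _ 4 (by norm_num) (by norm_num) (by omega)]
    show ((((t : ℕ)/2+1 : ℕ)) : ℝ) = _
    push_cast; ring

lemma gd_k3 (hD : 2*d+10 ≤ D) :
    gdFormat D d N x y yh w t ⟨D-3, by omega⟩ = ((((t : ℕ)/2 : ℕ) : ℝ) + 1)^2 := by
  rw [gd_pos x y yh w t hD 3 (by norm_num) (by norm_num)]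
  by_cases ht : (t : ℕ) % 2 = 0
  · rw [if_pos ht, posX_entry D _ 3 (by norm_num) (by norm_num) (by omega)]
    show ((((t : ℕ)/2+1 : ℕ)) : ℝ)^2 = _
    push_cast; ring
  · rw [if_neg ht, posY_entry D _ 3 (by norm_num) (by norm_num) (by omega)]
    show ((((t : ℕ)/2+1 : ℕ)) : ℝ)^2 = _
    push_cast; ring

lemma gd_k2 (hD : 2*d+10 ≤ D) :
    gdFormat D d N x y yh w t ⟨D-2, by omega⟩ = if (t : ℕ) % 2 = 0 then (1:ℝ) else 0 := by
  rw [gd_pos x y yh w t hD 2 (by norm_num) (by norm_num)]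
  by_cases ht : (t : ℕ) % 2 = 0
  · rw [if_pos ht, if_pos ht, posX_entry D _ 2 (by norm_num) (by norm_num) (by omega)]; rfl
  · rw [if_neg ht, if_neg ht, posY_entry D _ 2 (by norm_num) (by norm_num) (by omega)]; rfl

lemma gd_k1 (hD : 2*d+10 ≤ D) :
    gdFormat D d N x y yh w t ⟨D-1, by omega⟩
      = if (t : ℕ) % 2 = 0 then (((t : ℕ)/2 : ℕ) : ℝ) + 1 else 0 := by
  rw [gd_pos x y yh w t hD 1 (by norm_num) (by norm_num)]
  by_cases ht : (t : ℕ) % 2 = 0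
  · rw [if_pos ht, if_pos ht, posX_entry D _ 1 (by norm_num) (by norm_num) (by omega)]
    show ((((t : ℕ)/2+1 : ℕ)) : ℝ) = _
    push_cast; ring
  · rw [if_neg ht, if_neg ht, posY_entry D _ 1 (by norm_num) (by norm_num) (by omega)]; rfl

lemma gd_eq_outside (w' : ℕ → Fin d → ℝ) (r : Fin D)
    (hr : ¬(d+1 ≤ (r : ℕ) ∧ (r : ℕ) < 2*d+1)) :
    gdFormat D d N x y yh w t r = gdFormat D d N x y yh w' t r := by
  unfold gdFormat
  split_ifs <;> first | rfl | omega

end gdlemmas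

lemma final_arith (η lam a wI Sa Sb Sc : ℝ) (hane : a ≠ 0) (h2a : 2*a+1 ≠ 0)
    (h12 : Sa + Sb = -η * Sc) :
    wI + (1/(2*a+1) * Sa + 1/(2*a+1) * Sb + 1/(2*a+1) * (lam * a * (-η * wI)))
      = wI - η * a/(2*a+1) * (1/a * Sc + lam * wI) := by
  have hSa : Sa = -η * Sc - Sb := by linarith
  rw [hSa]
  field_simp
  ring

end OneStepGD

set_option maxHeartbeats 2000000

/-- **One gradient-descent step by a single attention layer
(Proposition `one-step-gd`).**
For any `η > 0`, `λ ≥ 0`, `B_x, B_w, B_y > 0` and `D_hid ≥ 2d + 10`, there is a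
3-head masked attention layer such that on any input with columns
`h_{2i-1} = [x_i; 0; w_i; p^x_i]`, `h_{2i} = [x_i; y_i; 0_d; p^y_i]` satisfying
the norm bounds, the output column `2i-1` equals `[x_i; 0; w̃_i; p^x_i]` where
`w̃_i = w_i - η_i ∇L̂_{i-1}^λ(w_i)` with `η_i = η (i-1)/(2i-1)`, and the output
column `2i` equals the input column `2i`.  (Tokens are 0-based: token `2i`
below is the math token `2i+1`, with math example index `i+1`.) -/
theorem attention_one_step_gd (d Dhid : ℕ) (η lam Bx Bw By : ℝ)
    (hη : 0 < η) (hlam : 0 ≤ lam)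
    (hBx : 0 < Bx) (hBw : 0 < Bw) (hBy : 0 < By)
    (hDhid : 2*d + 10 ≤ Dhid) :
    ∃ heads : Fin 3 → AttnHead Dhid,
      ∀ (N : ℕ) (x w : ℕ → Fin d → ℝ) (y : ℕ → ℝ),
        (∀ i < N, l2norm (x i) ≤ Bx) →
        (∀ i < N, |y i| ≤ By) →
        (∀ i < N, l2norm (w i) ≤ Bw) →
        ∀ i : Fin N,
          (∀ r : Fin Dhid,
            attnLayer heads (gdFormat Dhid d N x y (fun _ => 0) w)
                ⟨2*(i : ℕ), by have := i.2; omega⟩ r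
              = gdFormat Dhid d N x y (fun _ => 0)
                  (fun j => w j
                    - (η * (j : ℝ) / (2*(j : ℝ) + 1)) • ridgeGrad lam j x y (w j))
                  ⟨2*(i : ℕ), by have := i.2; omega⟩ r) ∧
          (∀ r : Fin Dhid,
            attnLayer heads (gdFormat Dhid d N x y (fun _ => 0) w)
                ⟨2*(i : ℕ) + 1, by have := i.2; omega⟩ r
              = gdFormat Dhid d N x y (fun _ => 0) w
                  ⟨2*(i : ℕ) + 1, by have := i.2; omega⟩ r) := by
  classical
  set R : ℝ := Bx*Bw + 1 with hRdef
  refine ⟨![⟨OneStepGD.Amat d Dhid 1 R, 1, OneStepGD.Vmat d Dhid (-η)⟩,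
            ⟨OneStepGD.Amat d Dhid (-1) R, 1, OneStepGD.Vmat d Dhid η⟩,
            ⟨OneStepGD.A3mat Dhid lam, 1, OneStepGD.V3mat d Dhid (-η)⟩], ?_⟩
  intro N x w y hx hy hw i
  have hiN := i.isLt
  set H : Fin (2*N) → Fin Dhid → ℝ := gdFormat Dhid d N x y (fun _ => 0) w with hHdef
  -- Cauchy–Schwarz bound
  have hdot : ∀ a b : ℕ, a < N → b < N → |∑ s : Fin d, w a s * x b s| ≤ Bx*Bw := by
    intro a b ha hb
    have h1 : ∑ s : Fin d, w a s * x b s ≤ l2norm (w a) * l2norm (x b) := by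
      have h := Real.sum_mul_le_sqrt_mul_sqrt Finset.univ (fun s => w a s) (fun s => x b s)
      simpa [l2norm] using h
    have h2 : -(∑ s : Fin d, w a s * x b s) ≤ l2norm (w a) * l2norm (x b) := by
      have h := Real.sum_mul_le_sqrt_mul_sqrt Finset.univ (fun s => -(w a s)) (fun s => x b s)
      simp only [neg_mul] at h
      rw [Finset.sum_neg_distrib] at h
      simpa [l2norm, neg_sq] using h
    have h4 : (0:ℝ) ≤ l2norm (x b) := Real.sqrt_nonneg _
    have h3 : l2norm (w a) * l2norm (x b) ≤ Bx*Bw := by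
      calc l2norm (w a) * l2norm (x b) ≤ Bw * Bx :=
            mul_le_mul (hw a ha) (hx b hb) h4 (le_of_lt hBw)
        _ = Bx*Bw := by ring
    rw [abs_le]
    constructor <;> linarith
  -- score of heads 1 and 2
  have hsc : ∀ (e : ℝ) (t j : Fin (2*N)),
      (OneStepGD.Amat d Dhid e R *ᵥ H t) ⬝ᵥ H j
        = if (t : ℕ) % 2 = 0 then
            e * (∑ s : Fin d, w ((t:ℕ)/2) s * x ((j:ℕ)/2) s)
              - e * (if (j:ℕ) % 2 = 0 then 0 else y ((j:ℕ)/2))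
              - R * (if (j:ℕ) % 2 = 0 then (1:ℝ) else 0)
          else 0 := by
    intro e t j
    rw [OneStepGD.Amat_score hDhid]
    have hsum : (∑ s : Fin d, H t ⟨d+1+(s:ℕ), by have := s.isLt; omega⟩
          * H j ⟨(s:ℕ), by have := s.isLt; omega⟩)
        = ∑ s : Fin d, (if (t:ℕ) % 2 = 0 then w ((t:ℕ)/2) s else 0) * x ((j:ℕ)/2) s := by
      apply Finset.sum_congr rfl
      intro s _
      rw [hHdef]
      rw [OneStepGD.gd_x x y _ w j hDhid (s:ℕ) s.isLt]
      rw [OneStepGD.gd_w x y _ w t hDhid ⟨d+1+(s:ℕ), by have := s.isLt; omega⟩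
          (by simp) (by have := s.isLt; simp; omega)]
      by_cases ht : (t:ℕ) % 2 = 0 <;> simp [ht, Nat.add_sub_cancel_left]
    rw [hsum, hHdef, OneStepGD.gd_k2 x y _ w t hDhid, OneStepGD.gd_k2 x y _ w j hDhid,
        OneStepGD.gd_y x y _ w j hDhid]
    by_cases ht : (t:ℕ) % 2 = 0
    · by_cases hj : (j:ℕ) % 2 = 0 <;> simp [ht, hj] <;> ring
    · simp [ht]
  -- score of head 3
  have hsc3 : ∀ (t j : Fin (2*N)),
      (OneStepGD.A3mat Dhid lam *ᵥ H t) ⬝ᵥ H j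
        = if (t:ℕ) % 2 = 0 then
            lam * ((((t:ℕ)/2 : ℕ) : ℝ)
              + ((((t:ℕ)/2 : ℕ) : ℝ) + 1) * ((((j:ℕ) : ℝ) + 1) - (2*(((t:ℕ)/2 : ℕ) : ℝ) + 1)))
          else lam * (((((t:ℕ)/2 : ℕ) : ℝ) + 1) - 2*((((t:ℕ)/2 : ℕ) : ℝ) + 1)^2) := by
    intro t j
    rw [OneStepGD.A3_score (by omega) lam]
    rw [hHdef, OneStepGD.gd_k1 x y _ w t hDhid, OneStepGD.gd_k2 x y _ w t hDhid,
        OneStepGD.gd_k3 x y _ w t hDhid, OneStepGD.gd_k4 x y _ w t hDhid,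
        OneStepGD.gd_k8 x y _ w j hDhid, OneStepGD.gd_k7 x y _ w j hDhid]
    by_cases ht : (t:ℕ) % 2 = 0 <;> simp [ht] <;> ring
  -- values
  have hv0 : ∀ (c0 : ℝ) (j : Fin (2*N)) (r : Fin Dhid), ¬(d+1 ≤ (r:ℕ) ∧ (r:ℕ) < 2*d+1) →
      (OneStepGD.Vmat d Dhid c0 *ᵥ H j) r = 0 := by
    intro c0 j r hr
    rw [OneStepGD.Vmat_apply hDhid, dif_neg hr]
  have hv30 : ∀ (j : Fin (2*N)) (r : Fin Dhid), ¬(d+1 ≤ (r:ℕ) ∧ (r:ℕ) < 2*d+1) →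
      (OneStepGD.V3mat d Dhid (-η) *ᵥ H j) r = 0 := by
    intro j r hr
    rw [OneStepGD.V3mat_apply hDhid, if_neg hr]
  have hv1 : ∀ (c0 : ℝ) (j : Fin (2*N)) (r : Fin Dhid), (hr : d+1 ≤ (r:ℕ) ∧ (r:ℕ) < 2*d+1) →
      (OneStepGD.Vmat d Dhid c0 *ᵥ H j) r
        = c0 * x ((j:ℕ)/2) ⟨(r:ℕ)-(d+1), by omega⟩ := by
    intro c0 j r hr
    rw [OneStepGD.Vmat_apply hDhid, dif_pos hr, hHdef, OneStepGD.gd_x x y _ w j hDhid]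
  have hv3 : ∀ (j : Fin (2*N)) (r : Fin Dhid), (hr : d+1 ≤ (r:ℕ) ∧ (r:ℕ) < 2*d+1) →
      (OneStepGD.V3mat d Dhid (-η) *ᵥ H j) r
        = if (j:ℕ) % 2 = 0 then -η * w ((j:ℕ)/2) ⟨(r:ℕ)-(d+1), by omega⟩ else 0 := by
    intro j r hr
    rw [OneStepGD.V3mat_apply hDhid, if_pos hr, hHdef,
        OneStepGD.gd_w x y _ w j hDhid r hr.1 hr.2]
    by_cases hj : (j:ℕ) % 2 = 0 <;> simp [hj]
  -- main even-token computation
  have main_even : ∀ (T : Fin (2*N)), (T:ℕ) = 2*(i:ℕ) → ∀ r : Fin Dhid,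
      attnLayer ![⟨OneStepGD.Amat d Dhid 1 R, 1, OneStepGD.Vmat d Dhid (-η)⟩,
            ⟨OneStepGD.Amat d Dhid (-1) R, 1, OneStepGD.Vmat d Dhid η⟩,
            ⟨OneStepGD.A3mat Dhid lam, 1, OneStepGD.V3mat d Dhid (-η)⟩] H T r
        = gdFormat Dhid d N x y (fun _ => 0)
            (fun j => w j - (η * (j : ℝ) / (2*(j : ℝ) + 1)) • ridgeGrad lam j x y (w j)) T r := by
    intro T hTv r
    have hTe : (T:ℕ) % 2 = 0 := by omega
    have hTd2 : (T:ℕ)/2 = (i:ℕ) := by omega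
    simp only [attnLayer, Pi.add_apply, Finset.sum_apply, Pi.smul_apply, smul_eq_mul,
      Fin.sum_univ_three, Matrix.cons_val_zero, Matrix.cons_val_one, Matrix.head_cons,
      Matrix.cons_val_two, Matrix.tail_cons, Matrix.one_mulVec]
    by_cases hr : d+1 ≤ (r:ℕ) ∧ (r:ℕ) < 2*d+1
    · have key : ∀ (e c0 : ℝ), (e = 1 ∨ e = -1) →
          (∑ j ∈ Finset.Iic T, relu ((OneStepGD.Amat d Dhid e R *ᵥ H T) ⬝ᵥ H j)
              * ((OneStepGD.Vmat d Dhid c0 *ᵥ H j) r))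
            = ∑ k ∈ Finset.range (i:ℕ),
                relu (e * ((∑ s : Fin d, w (i:ℕ) s * x k s) - y k))
                  * (c0 * x k ⟨(r:ℕ)-(d+1), by omega⟩) := by
        intro e c0 he
        rw [OneStepGD.sum_Iic_eq
              (fun j => relu ((OneStepGD.Amat d Dhid e R *ᵥ H T) ⬝ᵥ H j)
                * ((OneStepGD.Vmat d Dhid c0 *ᵥ H j) r)) T
              (fun n => if h : n < 2*N then
                 relu ((OneStepGD.Amat d Dhid e R *ᵥ H T) ⬝ᵥ H ⟨n, h⟩)
                   * ((OneStepGD.Vmat d Dhid c0 *ᵥ H ⟨n, h⟩) r) else 0)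
              (fun n h => dif_pos h), hTv, OneStepGD.sum_range_parity]
        have hodd : ∀ k ∈ Finset.range (i:ℕ),
            (if h : 2*k+1 < 2*N then
               relu ((OneStepGD.Amat d Dhid e R *ᵥ H T) ⬝ᵥ H ⟨2*k+1, h⟩)
                 * ((OneStepGD.Vmat d Dhid c0 *ᵥ H ⟨2*k+1, h⟩) r) else 0)
              = relu (e * ((∑ s : Fin d, w (i:ℕ) s * x k s) - y k))
                  * (c0 * x k ⟨(r:ℕ)-(d+1), by omega⟩) := by
          intro k hk
          have hk' := Finset.mem_range.mp hk
          have h2 : 2*k+1 < 2*N := by omega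
          rw [dif_pos h2, hsc e T ⟨2*k+1, h2⟩, hv1 c0 ⟨2*k+1, h2⟩ r hr]
          have e2 : ¬(((⟨2*k+1, h2⟩ : Fin (2*N)) : ℕ) % 2 = 0) := by
            show ¬((2*k+1) % 2 = 0); omega
          have e3 : ((⟨2*k+1, h2⟩ : Fin (2*N)) : ℕ)/2 = k := by
            show (2*k+1)/2 = k; omega
          rw [if_pos hTe, if_neg e2, if_neg e2, e3, hTd2]
          have harg : e * (∑ s : Fin d, w (i:ℕ) s * x k s) - e * y k - R * 0
              = e * ((∑ s : Fin d, w (i:ℕ) s * x k s) - y k) := by ring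
          rw [harg]
        have heven : ∀ k ∈ Finset.range ((i:ℕ)+1),
            (if h : 2*k < 2*N then
               relu ((OneStepGD.Amat d Dhid e R *ᵥ H T) ⬝ᵥ H ⟨2*k, h⟩)
                 * ((OneStepGD.Vmat d Dhid c0 *ᵥ H ⟨2*k, h⟩) r) else 0) = 0 := by
          intro k hk
          have hk' := Finset.mem_range.mp hk
          have h2 : 2*k < 2*N := by omega
          rw [dif_pos h2, hsc e T ⟨2*k, h2⟩]
          have e2 : ((⟨2*k, h2⟩ : Fin (2*N)) : ℕ) % 2 = 0 := by
            show (2*k) % 2 = 0; omega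
          have e3 : ((⟨2*k, h2⟩ : Fin (2*N)) : ℕ)/2 = k := by
            show (2*k)/2 = k; omega
          rw [if_pos hTe, if_pos e2, if_pos e2, e3, hTd2]
          obtain ⟨hb1, hb2⟩ := abs_le.mp (hdot (i:ℕ) k hiN (by omega))
          have harg : e * (∑ s : Fin d, w (i:ℕ) s * x k s) - e * 0 - R * 1 ≤ 0 := by
            rcases he with he | he <;> rw [he, hRdef] <;> ring_nf <;> linarith
          rw [OneStepGD.relu_of_nonpos harg, zero_mul]
        rw [Finset.sum_congr rfl hodd, Finset.sum_congr rfl heven]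
        simp
      have hS3 : (∑ j ∈ Finset.Iic T, relu ((OneStepGD.A3mat Dhid lam *ᵥ H T) ⬝ᵥ H j)
            * ((OneStepGD.V3mat d Dhid (-η) *ᵥ H j) r))
          = lam * ((i:ℕ):ℝ) * (-η * w (i:ℕ) ⟨(r:ℕ)-(d+1), by omega⟩) := by
        rw [OneStepGD.sum_Iic_eq
              (fun j => relu ((OneStepGD.A3mat Dhid lam *ᵥ H T) ⬝ᵥ H j)
                * ((OneStepGD.V3mat d Dhid (-η) *ᵥ H j) r)) T
              (fun n => if h : n < 2*N then
                 relu ((OneStepGD.A3mat Dhid lam *ᵥ H T) ⬝ᵥ H ⟨n, h⟩)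
                   * ((OneStepGD.V3mat d Dhid (-η) *ᵥ H ⟨n, h⟩) r) else 0)
              (fun n h => dif_pos h), hTv, OneStepGD.sum_range_parity]
        have hodd : ∀ k ∈ Finset.range (i:ℕ),
            (if h : 2*k+1 < 2*N then
               relu ((OneStepGD.A3mat Dhid lam *ᵥ H T) ⬝ᵥ H ⟨2*k+1, h⟩)
                 * ((OneStepGD.V3mat d Dhid (-η) *ᵥ H ⟨2*k+1, h⟩) r) else 0) = 0 := by
          intro k hk
          have hk' := Finset.mem_range.mp hk
          have h2 : 2*k+1 < 2*N := by omega
          rw [dif_pos h2, hv3 ⟨2*k+1, h2⟩ r hr]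
          have e2 : ¬(((⟨2*k+1, h2⟩ : Fin (2*N)) : ℕ) % 2 = 0) := by
            show ¬((2*k+1) % 2 = 0); omega
          rw [if_neg e2, mul_zero]
        have heven : ∀ k ∈ Finset.range ((i:ℕ)+1),
            (if h : 2*k < 2*N then
               relu ((OneStepGD.A3mat Dhid lam *ᵥ H T) ⬝ᵥ H ⟨2*k, h⟩)
                 * ((OneStepGD.V3mat d Dhid (-η) *ᵥ H ⟨2*k, h⟩) r) else 0)
              = (if k = (i:ℕ) then lam * ((i:ℕ):ℝ)
                  * (-η * w (i:ℕ) ⟨(r:ℕ)-(d+1), by omega⟩) else 0) := by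
          intro k hk
          have hk' := Finset.mem_range.mp hk
          have h2 : 2*k < 2*N := by omega
          rw [dif_pos h2, hsc3 T ⟨2*k, h2⟩, hv3 ⟨2*k, h2⟩ r hr]
          have e2 : ((⟨2*k, h2⟩ : Fin (2*N)) : ℕ) % 2 = 0 := by
            show (2*k) % 2 = 0; omega
          have e3 : ((⟨2*k, h2⟩ : Fin (2*N)) : ℕ) = 2*k := rfl
          have e4 : ((⟨2*k, h2⟩ : Fin (2*N)) : ℕ)/2 = k := by
            show (2*k)/2 = k; omega
          rw [if_pos hTe, if_pos e2, e4, e3, hTd2]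
          by_cases hk2 : k = (i:ℕ)
          · rw [hk2, if_pos rfl]
            have harg : lam * (((i:ℕ):ℝ) + (((i:ℕ):ℝ)+1)
                  * ((((2*(i:ℕ) : ℕ)):ℝ) + 1 - (2*((i:ℕ):ℝ)+1))) = lam * ((i:ℕ):ℝ) := by
              push_cast; ring
            rw [harg, OneStepGD.relu_of_nonneg (mul_nonneg hlam (Nat.cast_nonneg _))]
          · rw [if_neg hk2]
            have hki : k + 1 ≤ (i:ℕ) := by omega
            have hki' : (k:ℝ) + 1 ≤ ((i:ℕ):ℝ) := by exact_mod_cast hki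
            have harg : lam * (((i:ℕ):ℝ) + (((i:ℕ):ℝ)+1)
                  * ((((2*k : ℕ)):ℝ) + 1 - (2*((i:ℕ):ℝ)+1))) ≤ 0 := by
              have hc : ((2*k : ℕ):ℝ) = 2*(k:ℝ) := by push_cast; ring
              rw [hc]
              have h0 : (0:ℝ) ≤ ((i:ℕ):ℝ) := Nat.cast_nonneg _
              have hprod : (((i:ℕ):ℝ)+1) * ((k:ℝ) - ((i:ℕ):ℝ)) ≤ (((i:ℕ):ℝ)+1) * (-1) :=
                mul_le_mul_of_nonneg_left (by linarith) (by linarith)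
              have harg2 : (((i:ℕ):ℝ) + (((i:ℕ):ℝ)+1) * (2*(k:ℝ) + 1 - (2*((i:ℕ):ℝ)+1))) ≤ 0 := by
                nlinarith [hprod]
              have := mul_le_mul_of_nonneg_left harg2 hlam
              simpa using this
            rw [OneStepGD.relu_of_nonpos harg, zero_mul]
        rw [Finset.sum_congr rfl hodd, Finset.sum_congr rfl heven,
            Finset.sum_ite_eq' (Finset.range ((i:ℕ)+1)) (i:ℕ)]
        simp
      rw [key 1 (-η) (Or.inl rfl), key (-1) η (Or.inr rfl), hS3]
      have hHT : H T r = w (i:ℕ) ⟨(r:ℕ)-(d+1), by omega⟩ := by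
        rw [hHdef, OneStepGD.gd_w x y _ w T hDhid r hr.1 hr.2, if_pos hTe, hTd2]
      have hRHS : gdFormat Dhid d N x y (fun _ => 0)
            (fun j => w j - (η * (j : ℝ) / (2*(j : ℝ) + 1)) • ridgeGrad lam j x y (w j)) T r
          = w (i:ℕ) ⟨(r:ℕ)-(d+1), by omega⟩
            - (η * ((i:ℕ):ℝ) / (2*((i:ℕ):ℝ) + 1))
              * ridgeGrad lam (i:ℕ) x y (w (i:ℕ)) ⟨(r:ℕ)-(d+1), by omega⟩ := by
        rw [OneStepGD.gd_w x y _ _ T hDhid r hr.1 hr.2, if_pos hTe, hTd2]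
        simp only [Pi.sub_apply, Pi.smul_apply, smul_eq_mul]
      rw [hHT, hRHS, hTv]
      by_cases hi0 : (i:ℕ) = 0
      · rw [hi0]
        simp [ridgeGrad]
      · rw [ridgeGrad, if_neg hi0]
        simp only [Pi.add_apply, Pi.smul_apply, Finset.sum_apply, smul_eq_mul]
        have hI : ((2*(i:ℕ) : ℕ) : ℝ) = 2*((i:ℕ):ℝ) := by push_cast; ring
        rw [hI]
        have hdd : (∑ k ∈ Finset.range (i:ℕ),
              (w (i:ℕ) ⬝ᵥ x k - y k) * x k (⟨(r:ℕ)-(d+1), by omega⟩ : Fin d))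
            = ∑ k ∈ Finset.range (i:ℕ),
                ((∑ s : Fin d, w (i:ℕ) s * x k s) - y k) * x k ⟨(r:ℕ)-(d+1), by omega⟩ := rfl
        rw [hdd]
        have h12 : (∑ k ∈ Finset.range (i:ℕ),
              relu (1 * ((∑ s : Fin d, w (i:ℕ) s * x k s) - y k))
                * (-η * x k (⟨(r:ℕ)-(d+1), by omega⟩ : Fin d)))
            + (∑ k ∈ Finset.range (i:ℕ),
              relu (-1 * ((∑ s : Fin d, w (i:ℕ) s * x k s) - y k))
                * (η * x k ⟨(r:ℕ)-(d+1), by omega⟩))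
            = -η * ∑ k ∈ Finset.range (i:ℕ),
                ((∑ s : Fin d, w (i:ℕ) s * x k s) - y k) * x k ⟨(r:ℕ)-(d+1), by omega⟩ := by
          rw [← Finset.sum_add_distrib, Finset.mul_sum]
          refine Finset.sum_congr rfl fun k _ => ?_
          have h := OneStepGD.relu_sub ((∑ s : Fin d, w (i:ℕ) s * x k s) - y k)
          rw [one_mul, neg_one_mul]
          linear_combination (-η * x k (⟨(r:ℕ)-(d+1), by omega⟩ : Fin d)) * h
        have hi' : ((i:ℕ):ℝ) ≠ 0 := Nat.cast_ne_zero.mpr hi0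
        have h2a : 2*((i:ℕ):ℝ)+1 ≠ 0 := by positivity
        exact OneStepGD.final_arith η lam _ _ _ _ _ hi' h2a h12

    · rw [Finset.sum_eq_zero (fun j _ => by rw [hv0 (-η) j r hr, mul_zero]),
          Finset.sum_eq_zero (fun j _ => by rw [hv0 η j r hr, mul_zero]),
          Finset.sum_eq_zero (fun j _ => by rw [hv30 j r hr, mul_zero])]
      simp only [mul_zero, add_zero]
      rw [hHdef]
      exact OneStepGD.gd_eq_outside x y _ w T _ r hr
  -- odd tokens are unchanged
  have main_odd : ∀ (T : Fin (2*N)), (T:ℕ) % 2 = 1 → ∀ r : Fin Dhid,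
      attnLayer ![⟨OneStepGD.Amat d Dhid 1 R, 1, OneStepGD.Vmat d Dhid (-η)⟩,
            ⟨OneStepGD.Amat d Dhid (-1) R, 1, OneStepGD.Vmat d Dhid η⟩,
            ⟨OneStepGD.A3mat Dhid lam, 1, OneStepGD.V3mat d Dhid (-η)⟩] H T r = H T r := by
    intro T hT r
    have hTo : ¬((T:ℕ) % 2 = 0) := by omega
    simp only [attnLayer, Pi.add_apply, Finset.sum_apply, Pi.smul_apply, smul_eq_mul,
      Fin.sum_univ_three, Matrix.cons_val_zero, Matrix.cons_val_one, Matrix.head_cons,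
      Matrix.cons_val_two, Matrix.tail_cons, Matrix.one_mulVec]
    rw [Finset.sum_eq_zero (fun j _ => by
          rw [hsc 1 T j, if_neg hTo, OneStepGD.relu_of_nonpos (le_refl 0), zero_mul]),
        Finset.sum_eq_zero (fun j _ => by
          rw [hsc (-1) T j, if_neg hTo, OneStepGD.relu_of_nonpos (le_refl 0), zero_mul]),
        Finset.sum_eq_zero (fun j _ => by
          rw [hsc3 T j, if_neg hTo]
          have hm : (1:ℝ) ≤ (((T:ℕ)/2 : ℕ) : ℝ) + 1 := by
            have : (0:ℝ) ≤ (((T:ℕ)/2 : ℕ) : ℝ) := Nat.cast_nonneg _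
            linarith
          have hX : ((((T:ℕ)/2 : ℕ) : ℝ) + 1) - 2*((((T:ℕ)/2 : ℕ) : ℝ) + 1)^2 ≤ 0 := by nlinarith
          have hX2 := mul_le_mul_of_nonneg_left hX hlam
          rw [OneStepGD.relu_of_nonpos (by simpa using hX2), zero_mul])]
    simp
  refine ⟨fun r => ?_, fun r => ?_⟩
  · exact main_even ⟨2*(i:ℕ), by have := i.2; omega⟩ rfl r
  · exact main_odd ⟨2*(i:ℕ)+1, by have := i.2; omega⟩ (by show (2*(i:ℕ)+1) % 2 = 1; omega) r

end
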